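/- Let n ≥ 1 be an integer and r ∈ (0,1), and set c_r = (2r−1)/(r(1−r)) and σ(t) = max(0,t). Define g : ℝ → ℝ by g(x) = −σ(−x) + ((1−r)/r)·σ(x) − c_r·∑_{i=1}^{n−1} σ(x − i/n) − ((2r−1)/(1−r))·σ(x − 1) + c_r·∑_{i=1}^{n} σ(x − (i−1+r)/n). Then g = h^r; that is, g is a continuous piecewise-linear function with g(x) = x for all x ∉ [0,1], g(j/n) = j/n for j = 0,…,n, g((j+r)/n) = (j+1−r)/n for j = 0,…,n−1, and g is affine on each interval [j/n, (j+r)/n] and [(j+r)/n, (j+1)/n]. -/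

import Mathlib

open scoped NNReal

/-- `h` is affine on the interval `[a, b]`. -/
def AffineOn (h : ℝ → ℝ) (a b : ℝ) : Prop :=
  ∃ m c : ℝ, ∀ x ∈ Set.Icc a b, h x = m * x + c

/-- `h` is the continuous piecewise-linear function `h^r` from the paper. -/
def IsHr (n : ℕ) (r : ℝ) (h : ℝ → ℝ) : Prop :=
  Continuous h ∧
  (∀ x : ℝ, x ∉ Set.Icc (0:ℝ) 1 → h x = x) ∧
  (∀ j : ℕ, j ≤ n → h ((j : ℝ) / n) = (j : ℝ) / n) ∧
  (∀ j : ℕ, j < n → h (((j : ℝ) + r) / n) = ((j : ℝ) + 1 - r) / n) ∧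
  (∀ j : ℕ, j < n → AffineOn h ((j : ℝ) / n) (((j : ℝ) + r) / n)) ∧
  (∀ j : ℕ, j < n → AffineOn h (((j : ℝ) + r) / n) (((j : ℝ) + 1) / n))

/-- Restrict a sum of ReLUs to its set of active indices. -/
lemma sum_relu_restrict (s t : Finset ℕ) (hts : t ⊆ s) (f : ℕ → ℝ) (x : ℝ)
    (h1 : ∀ i ∈ t, f i ≤ x) (h2 : ∀ i ∈ s, i ∉ t → x ≤ f i) :
    ∑ i ∈ s, max 0 (x - f i) = ∑ i ∈ t, (x - f i) := by
  have step1 : ∑ i ∈ t, max 0 (x - f i) = ∑ i ∈ s, max 0 (x - f i) :=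
    Finset.sum_subset hts (fun i hi hni => max_eq_left (by linarith [h2 i hi hni]))
  rw [← step1]
  exact Finset.sum_congr rfl (fun i hi => max_eq_right (by linarith [h1 i hi]))

/-- The explicit two-layer ReLU network realizes `h^r` exactly:
`g(x) = −σ(−x) + ((1−r)/r)σ(x) − c_r ∑_{i=1}^{n−1} σ(x − i/n)
      − ((2r−1)/(1−r)) σ(x − 1) + c_r ∑_{i=1}^{n} σ(x − (i−1+r)/n)`
with `c_r = (2r−1)/(r(1−r))` equals `h^r`. -/
theorem relu_network_realizes_hr (n : ℕ) (hn : 1 ≤ n) (r : ℝ) (hr : r ∈ Set.Ioo (0:ℝ) 1)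
    (cr : ℝ) (hcr : cr = (2 * r - 1) / (r * (1 - r)))
    (g : ℝ → ℝ)
    (hg : ∀ x : ℝ,
      g x = -(max 0 (-x)) + ((1 - r) / r) * max 0 x
        - cr * ∑ i ∈ Finset.Ico 1 n, max 0 (x - (i : ℝ) / n)
        - ((2 * r - 1) / (1 - r)) * max 0 (x - 1)
        + cr * ∑ i ∈ Finset.Icc 1 n, max 0 (x - ((i : ℝ) - 1 + r) / n)) :
    IsHr n r g := by
  obtain ⟨hr0, hr1⟩ := hr
  have hn0 : (0:ℝ) < n := by exact_mod_cast hn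
  have hn' : (n:ℝ) ≠ 0 := ne_of_gt hn0
  have hrne : r ≠ 0 := ne_of_gt hr0
  have h1rne : (1:ℝ) - r ≠ 0 := by intro h; linarith
  have hdiv : ∀ a b : ℝ, a ≤ b → a / (n:ℝ) ≤ b / (n:ℝ) :=
    fun a b h => div_le_div_of_nonneg_right h hn0.le
  -- the difference of the two partial sums over `Icc 1 j`
  have hsum : ∀ (j : ℕ) (x : ℝ),
      ∑ i ∈ Finset.Icc 1 j, (x - ((i : ℝ) - 1 + r) / n)
        - ∑ i ∈ Finset.Icc 1 j, (x - (i : ℝ) / n) = (j : ℝ) * ((1 - r) / n) := by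
    intro j x
    rw [← Finset.sum_sub_distrib]
    have h1 : ∀ i ∈ Finset.Icc 1 j,
        (x - ((i:ℝ)-1+r)/(n:ℝ)) - (x - (i:ℝ)/(n:ℝ)) = (1-r)/(n:ℝ) := fun i _ => by
      field_simp; ring
    rw [Finset.sum_congr rfl h1, Finset.sum_const, Nat.card_Icc]
    simp [nsmul_eq_mul]
  -- formula on [j/n, (j+r)/n]
  have hA : ∀ j : ℕ, j < n → ∀ x : ℝ, (j:ℝ)/n ≤ x → x ≤ ((j:ℝ)+r)/n →
      g x = (1-r)/r * x + cr * ((j:ℝ) * ((1-r)/n)) := by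
    intro j hj x hx1 hx2
    have hjn : (j:ℝ) + 1 ≤ n := by exact_mod_cast hj
    have hxnn : 0 ≤ x := le_trans (by positivity) hx1
    have hx1' : x ≤ 1 := by
      refine le_trans hx2 ?_
      rw [div_le_one hn0]; linarith
    have e1 : ∑ i ∈ Finset.Ico 1 n, max 0 (x - (i : ℝ) / n)
        = ∑ i ∈ Finset.Icc 1 j, (x - (i : ℝ) / n) := by
      apply sum_relu_restrict
      · intro i hi
        rw [Finset.mem_Icc] at hi
        rw [Finset.mem_Ico]
        exact ⟨hi.1, lt_of_le_of_lt hi.2 hj⟩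
      · intro i hi
        rw [Finset.mem_Icc] at hi
        have hij : (i:ℝ) ≤ j := by exact_mod_cast hi.2
        exact le_trans (hdiv _ _ hij) hx1
      · intro i hi hni
        rw [Finset.mem_Ico] at hi
        rw [Finset.mem_Icc, not_and_or, not_le, not_le] at hni
        have hji : j + 1 ≤ i := by omega
        have hji' : (j:ℝ) + 1 ≤ i := by exact_mod_cast hji
        exact le_trans hx2 (hdiv _ _ (by linarith))
    have e2 : ∑ i ∈ Finset.Icc 1 n, max 0 (x - ((i : ℝ) - 1 + r) / n)
        = ∑ i ∈ Finset.Icc 1 j, (x - ((i : ℝ) - 1 + r) / n) := by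
      apply sum_relu_restrict
      · intro i hi
        rw [Finset.mem_Icc] at hi ⊢
        exact ⟨hi.1, le_trans hi.2 (le_of_lt hj)⟩
      · intro i hi
        rw [Finset.mem_Icc] at hi
        have hij : (i:ℝ) ≤ j := by exact_mod_cast hi.2
        exact le_trans (hdiv _ _ (by linarith)) hx1
      · intro i hi hni
        rw [Finset.mem_Icc] at hi
        rw [Finset.mem_Icc, not_and_or, not_le, not_le] at hni
        have hji : j + 1 ≤ i := by omega
        have hji' : (j:ℝ) + 1 ≤ i := by exact_mod_cast hji
        exact le_trans hx2 (hdiv _ _ (by linarith))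
    rw [hg x, e1, e2, max_eq_left (by linarith : -x ≤ 0), max_eq_right hxnn,
      max_eq_left (by linarith : x - 1 ≤ 0)]
    linear_combination cr * hsum j x
  -- formula on [(j+r)/n, (j+1)/n]
  have hB : ∀ j : ℕ, j < n → ∀ x : ℝ, ((j:ℝ)+r)/n ≤ x → x ≤ ((j:ℝ)+1)/n →
      g x = (1-r)/r * x + cr * ((j:ℝ) * ((1-r)/n)) + cr * (x - ((j:ℝ)+r)/n) := by
    intro j hj x hx1 hx2
    have hjn : (j:ℝ) + 1 ≤ n := by exact_mod_cast hj
    have hxnn : 0 ≤ x := le_trans (by positivity) hx1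
    have hx1' : x ≤ 1 := by
      refine le_trans hx2 ?_
      rw [div_le_one hn0]; linarith
    have e1 : ∑ i ∈ Finset.Ico 1 n, max 0 (x - (i : ℝ) / n)
        = ∑ i ∈ Finset.Icc 1 j, (x - (i : ℝ) / n) := by
      apply sum_relu_restrict
      · intro i hi
        rw [Finset.mem_Icc] at hi
        rw [Finset.mem_Ico]
        exact ⟨hi.1, lt_of_le_of_lt hi.2 hj⟩
      · intro i hi
        rw [Finset.mem_Icc] at hi
        have hij : (i:ℝ) ≤ j := by exact_mod_cast hi.2
        exact le_trans (hdiv _ _ (by linarith)) hx1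
      · intro i hi hni
        rw [Finset.mem_Ico] at hi
        rw [Finset.mem_Icc, not_and_or, not_le, not_le] at hni
        have hji : j + 1 ≤ i := by omega
        have hji' : (j:ℝ) + 1 ≤ i := by exact_mod_cast hji
        exact le_trans hx2 (hdiv _ _ (by linarith))
    have e2 : ∑ i ∈ Finset.Icc 1 n, max 0 (x - ((i : ℝ) - 1 + r) / n)
        = ∑ i ∈ Finset.Icc 1 (j+1), (x - ((i : ℝ) - 1 + r) / n) := by
      apply sum_relu_restrict
      · intro i hi
        rw [Finset.mem_Icc] at hi ⊢
        exact ⟨hi.1, le_trans hi.2 hj⟩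
      · intro i hi
        rw [Finset.mem_Icc] at hi
        have hij : (i:ℝ) ≤ (j:ℝ) + 1 := by exact_mod_cast hi.2
        exact le_trans (hdiv _ _ (by linarith)) hx1
      · intro i hi hni
        rw [Finset.mem_Icc] at hi
        rw [Finset.mem_Icc, not_and_or, not_le, not_le] at hni
        have hji : j + 2 ≤ i := by omega
        have hji' : (j:ℝ) + 2 ≤ i := by exact_mod_cast hji
        exact le_trans hx2 (hdiv _ _ (by linarith))
    have esplit : ∑ i ∈ Finset.Icc 1 (j+1), (x - ((i : ℝ) - 1 + r) / n)
        = ∑ i ∈ Finset.Icc 1 j, (x - ((i : ℝ) - 1 + r) / n) + (x - ((j:ℝ)+r)/n) := by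
      rw [Finset.sum_Icc_succ_top (Nat.le_add_left 1 j)]
      push_cast
      ring
    rw [hg x, e1, e2, esplit, max_eq_left (by linarith : -x ≤ 0), max_eq_right hxnn,
      max_eq_left (by linarith : x - 1 ≤ 0)]
    linear_combination cr * hsum j x
  constructor
  · -- continuity
    have hσ : Continuous (fun t : ℝ => max 0 t) := continuous_const.max continuous_id
    have hgf : g = fun x : ℝ => -(max 0 (-x)) + ((1 - r) / r) * max 0 x
        - cr * ∑ i ∈ Finset.Ico 1 n, max 0 (x - (i : ℝ) / n)
        - ((2 * r - 1) / (1 - r)) * max 0 (x - 1)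
        + cr * ∑ i ∈ Finset.Icc 1 n, max 0 (x - ((i : ℝ) - 1 + r) / n) := funext hg
    rw [hgf]
    have c1 : Continuous fun x : ℝ => ∑ i ∈ Finset.Ico 1 n, max 0 (x - (i : ℝ) / n) :=
      continuous_finset_sum _ (fun i _ => hσ.comp (continuous_id.sub continuous_const))
    have c2 : Continuous fun x : ℝ =>
        ∑ i ∈ Finset.Icc 1 n, max 0 (x - ((i : ℝ) - 1 + r) / n) :=
      continuous_finset_sum _ (fun i _ => hσ.comp (continuous_id.sub continuous_const))
    exact (((((hσ.comp continuous_neg).neg.add (continuous_const.mul hσ)).sub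
      (continuous_const.mul c1)).sub
      (continuous_const.mul (hσ.comp (continuous_id.sub continuous_const)))).add
      (continuous_const.mul c2))
  refine ⟨?_, ?_, ?_, ?_, ?_⟩
  · -- identity outside [0,1]
    intro x hx
    rw [Set.mem_Icc, not_and_or, not_le, not_le] at hx
    rcases hx with hx | hx
    · -- x < 0
      rw [hg x]
      have e1 : ∑ i ∈ Finset.Ico 1 n, max 0 (x - (i : ℝ) / n) = 0 :=
        Finset.sum_eq_zero (fun i _ => max_eq_left (by
          have h0 : (0:ℝ) ≤ (i:ℝ)/n := by positivity
          linarith))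
      have e2 : ∑ i ∈ Finset.Icc 1 n, max 0 (x - ((i : ℝ) - 1 + r) / n) = 0 :=
        Finset.sum_eq_zero (fun i hi => max_eq_left (by
          rw [Finset.mem_Icc] at hi
          have h1 : (1:ℝ) ≤ (i:ℝ) := by exact_mod_cast hi.1
          have h0 : (0:ℝ) ≤ ((i:ℝ)-1+r)/n := div_nonneg (by linarith) hn0.le
          linarith))
      rw [e1, e2, max_eq_right (by linarith : (0:ℝ) ≤ -x),
        max_eq_left hx.le, max_eq_left (by linarith : x - 1 ≤ 0)]
      ring
    · -- 1 < x
      rw [hg x]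
      have e1 : ∑ i ∈ Finset.Ico 1 n, max 0 (x - (i : ℝ) / n)
          = ∑ i ∈ Finset.Icc 1 (n-1), (x - (i : ℝ) / n) := by
        apply sum_relu_restrict
        · intro i hi
          rw [Finset.mem_Icc] at hi
          rw [Finset.mem_Ico]
          omega
        · intro i hi
          rw [Finset.mem_Icc] at hi
          have h2 : (i:ℝ) ≤ n := by exact_mod_cast le_trans hi.2 (Nat.sub_le n 1)
          have hle : (i:ℝ)/n ≤ 1 := by rw [div_le_one hn0]; linarith
          linarith
        · intro i hi hni
          rw [Finset.mem_Ico] at hi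
          rw [Finset.mem_Icc] at hni
          omega
      have e2 : ∑ i ∈ Finset.Icc 1 n, max 0 (x - ((i : ℝ) - 1 + r) / n)
          = ∑ i ∈ Finset.Icc 1 n, (x - ((i : ℝ) - 1 + r) / n) := by
        apply Finset.sum_congr rfl
        intro i hi
        rw [Finset.mem_Icc] at hi
        have h2 : (i:ℝ) ≤ (n:ℝ) := by exact_mod_cast hi.2
        have hle : ((i:ℝ)-1+r)/n ≤ 1 := by rw [div_le_one hn0]; linarith
        exact max_eq_right (by linarith)
      obtain ⟨m, rfl⟩ : ∃ m, n = m + 1 := ⟨n - 1, (Nat.succ_pred_eq_of_pos hn).symm⟩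
      have hmm : m + 1 - 1 = m := rfl
      rw [e1, e2, hmm]
      have esplit : ∑ i ∈ Finset.Icc 1 (m+1), (x - ((i : ℝ) - 1 + r) / ((m+1:ℕ):ℝ))
          = ∑ i ∈ Finset.Icc 1 m, (x - ((i : ℝ) - 1 + r) / ((m+1:ℕ):ℝ))
            + (x - ((m:ℝ)+r)/((m+1:ℕ):ℝ)) := by
        rw [Finset.sum_Icc_succ_top (Nat.le_add_left 1 m)]
        push_cast
        ring
      rw [esplit, max_eq_left (by linarith : -x ≤ 0),
        max_eq_right (by linarith : (0:ℝ) ≤ x),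
        max_eq_right (by linarith : (0:ℝ) ≤ x - 1)]
      have hkey := hsum m x
      set S1 := ∑ i ∈ Finset.Icc 1 m, (x - (i : ℝ) / ((m+1:ℕ):ℝ)) with hS1def
      set S2 := ∑ i ∈ Finset.Icc 1 m, (x - ((i : ℝ) - 1 + r) / ((m+1:ℕ):ℝ)) with hS2def
      have hS2 : S2 = S1 + (m:ℝ) * ((1-r)/((m+1:ℕ):ℝ)) := by linarith
      rw [hS2, hcr]
      have hm1 : ((m+1:ℕ):ℝ) ≠ 0 := hn'
      field_simp
      push_cast
      ring
  · -- values at j/n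
    intro j hj
    rcases Nat.eq_zero_or_pos j with h0 | hpos
    · subst h0
      have hle : ((0:ℕ):ℝ)/n ≤ (((0:ℕ):ℝ)+r)/n := hdiv _ _ (by simp [hr0.le])
      rw [hA 0 hn _ le_rfl hle]
      simp
    · obtain ⟨k, rfl⟩ : ∃ k, j = k + 1 := ⟨j - 1, (Nat.succ_pred_eq_of_pos hpos).symm⟩
      have hk : k < n := by omega
      have hx1 : ((k:ℝ)+r)/n ≤ ((k:ℝ)+1)/n := hdiv _ _ (by linarith)
      have hcast : ((k+1:ℕ):ℝ) = (k:ℝ)+1 := by push_cast; ring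
      rw [hcast, hB k hk (((k:ℝ)+1)/n) hx1 le_rfl, hcr]
      field_simp
      ring
  · -- values at (j+r)/n
    intro j hj
    have hx1 : (j:ℝ)/n ≤ ((j:ℝ)+r)/n := hdiv _ _ (by linarith)
    rw [hA j hj (((j:ℝ)+r)/n) hx1 le_rfl, hcr]
    field_simp
    ring
  · -- affine on [j/n, (j+r)/n]
    intro j hj
    exact ⟨(1-r)/r, cr * ((j:ℝ) * ((1-r)/n)),
      fun x hx => hA j hj x hx.1 hx.2⟩
  · -- affine on [(j+r)/n, (j+1)/n]
    intro j hj
    refine ⟨(1-r)/r + cr, cr * ((j:ℝ) * ((1-r)/n)) - cr * (((j:ℝ)+r)/n), fun x hx => ?_⟩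
    rw [hB j hj x hx.1 hx.2]
    ring
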